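/- For the direct product G = K[a₁,b₁] × K[a₂,b₂] of two balanced complete multipartite graphs with 2 ≤ b₁ ≤ b₂, the upper domination number satisfies Γ(G) = (a₁ b₁ a₂ b₂)/b₁ = a₁ a₂ b₂. -/

import Mathlib

/-- `D` is a dominating set of `G`. -/
def IsDomSet {V : Type*} (G : SimpleGraph V) (D : Set V) : Prop :=
  ∀ v, v ∈ D ∨ ∃ d ∈ D, G.Adj v d

/-- `D` is a total dominating set of `G`. -/
def IsTotalDomSet {V : Type*} (G : SimpleGraph V) (D : Set V) : Prop :=
  ∀ v, ∃ d ∈ D, G.Adj v d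

/-- `D` is a minimal dominating set of `G`. -/
def IsMinimalDomSet {V : Type*} (G : SimpleGraph V) (D : Set V) : Prop :=
  IsDomSet G D ∧ ∀ D' ⊂ D, ¬ IsDomSet G D'

/-- The domination number of `G`. -/
noncomputable def domNum {V : Type*} (G : SimpleGraph V) : ℕ :=
  sInf {k | ∃ D : Set V, IsDomSet G D ∧ D.ncard = k}

/-- The total domination number of `G`. -/
noncomputable def totalDomNum {V : Type*} (G : SimpleGraph V) : ℕ :=
  sInf {k | ∃ D : Set V, IsTotalDomSet G D ∧ D.ncard = k}

/-- The upper domination number of `G`. -/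
noncomputable def upperDomNum {V : Type*} (G : SimpleGraph V) : ℕ :=
  sSup {k | ∃ D : Set V, IsMinimalDomSet G D ∧ D.ncard = k}

/-- Jacobsthal's function. -/
noncomputable def jacobsthal (n : ℕ) : ℕ :=
  sInf {m | 0 < m ∧ ∀ x : ℤ, ∃ i : ℕ, i < m ∧ Int.gcd (x + i) n = 1}

/-- The unitary Cayley graph of `ℤ/nℤ`. -/
def unitaryCayley (n : ℕ) : SimpleGraph (ZMod n) where
  Adj x y := x ≠ y ∧ IsUnit (x - y)
  symm := ⟨by
    rintro x y ⟨h1, h2⟩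
    exact ⟨h1.symm, by simpa [neg_sub] using h2.neg⟩⟩
  loopless := ⟨by rintro x ⟨h, _⟩; exact h rfl⟩

/-- The direct product of complete graphs `K_{n 0} × ⋯ × K_{n (t-1)}`. -/
def completeProd (t : ℕ) (n : Fin t → ℕ) : SimpleGraph (∀ i, ZMod (n i)) where
  Adj x y := x ≠ y ∧ ∀ i, x i ≠ y i
  symm := ⟨by rintro x y ⟨h1, h2⟩; exact ⟨h1.symm, fun i => (h2 i).symm⟩⟩
  loopless := ⟨by rintro x ⟨h, _⟩; exact h rfl⟩

/-- The direct product of balanced complete multipartite graphs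
`K[a 0, b 0] × ⋯ × K[a (t-1), b (t-1)]`, where `K[a,b]` has vertex set `ZMod (a*b)`
with `x ~ y` iff `x ≢ y (mod b)`. -/
def multipartiteProd (t : ℕ) (a b : Fin t → ℕ) :
    SimpleGraph (∀ i, ZMod (a i * b i)) where
  Adj x y := x ≠ y ∧ ∀ i, (x i).val % b i ≠ (y i).val % b i
  symm := ⟨by rintro x y ⟨h1, h2⟩; exact ⟨h1.symm, fun i => (h2 i).symm⟩⟩
  loopless := ⟨by rintro x ⟨h, _⟩; exact h rfl⟩

/-- The direct (tensor) product of two graphs. -/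
def directProd {V W : Type*} (G : SimpleGraph V) (H : SimpleGraph W) :
    SimpleGraph (V × W) where
  Adj x y := G.Adj x.1 y.1 ∧ H.Adj x.2 y.2
  symm := ⟨by rintro x y ⟨h1, h2⟩; exact ⟨h1.symm, h2.symm⟩⟩
  loopless := ⟨by rintro x ⟨h, _⟩; exact G.loopless.irrefl _ h⟩
private lemma nz (a b : Fin 2 → ℕ) (ha : ∀ i, 0 < a i) (hb0 : 2 ≤ b 0) (hb : b 0 ≤ b 1) :
    ∀ i, NeZero (a i * b i) := by
  intro i
  match i with
  | 0 => exact ⟨Nat.mul_ne_zero (ha 0).ne' (by omega)⟩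
  | 1 => exact ⟨Nat.mul_ne_zero (ha 1).ne' (by omega)⟩

private lemma adj_iff (a b : Fin 2 → ℕ) (x y : ∀ i, ZMod (a i * b i)) :
    (multipartiteProd 2 a b).Adj x y ↔
      ((x 0).val % b 0 ≠ (y 0).val % b 0 ∧ (x 1).val % b 1 ≠ (y 1).val % b 1) := by
  constructor
  · rintro ⟨-, h⟩
    exact ⟨h 0, h 1⟩
  · rintro ⟨h0, h1⟩
    refine ⟨fun he => h0 (by rw [he]), Fin.forall_fin_two.mpr ⟨h0, h1⟩⟩

private def mkV (a b : Fin 2 → ℕ) (s0 s1 : ℕ) : ∀ i, ZMod (a i * b i) := fun i =>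
  match i with
  | 0 => (s0 : ZMod (a 0 * b 0))
  | 1 => (s1 : ZMod (a 1 * b 1))

private lemma mkV_res0 (a b : Fin 2 → ℕ) (ha : ∀ i, 0 < a i) (hb0 : 2 ≤ b 0) (hb : b 0 ≤ b 1)
    (s0 s1 : ℕ) (h0 : s0 < b 0) : ((mkV a b s0 s1) 0).val % b 0 = s0 := by
  haveI := nz a b ha hb0 hb
  have : ((mkV a b s0 s1) 0).val = s0 :=
    ZMod.val_cast_of_lt (lt_of_lt_of_le h0 (Nat.le_mul_of_pos_left _ (ha 0)))
  rw [this, Nat.mod_eq_of_lt h0]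

private lemma mkV_res1 (a b : Fin 2 → ℕ) (ha : ∀ i, 0 < a i) (hb0 : 2 ≤ b 0) (hb : b 0 ≤ b 1)
    (s0 s1 : ℕ) (h1 : s1 < b 1) : ((mkV a b s0 s1) 1).val % b 1 = s1 := by
  haveI := nz a b ha hb0 hb
  have : ((mkV a b s0 s1) 1).val = s1 :=
    ZMod.val_cast_of_lt (lt_of_lt_of_le h1 (Nat.le_mul_of_pos_left _ (ha 1)))
  rw [this, Nat.mod_eq_of_lt h1]

private lemma inj1 (a b : Fin 2 → ℕ) (ha : ∀ i, 0 < a i) (hb0 : 2 ≤ b 0) (hb : b 0 ≤ b 1)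
    (ha0 : a 0 = 1) (ha1 : a 1 = 1) (x y : ∀ i, ZMod (a i * b i))
    (h0 : (x 0).val % b 0 = (y 0).val % b 0) (h1 : (x 1).val % b 1 = (y 1).val % b 1) :
    x = y := by
  haveI := nz a b ha hb0 hb
  have key : ∀ i, a i = 1 → (x i).val % b i = (y i).val % b i → x i = y i := by
    intro i hai h
    have hx := ZMod.val_lt (x i)
    have hy := ZMod.val_lt (y i)
    have hab : a i * b i = b i := by rw [hai, Nat.one_mul]
    have hx' := lt_of_lt_of_eq hx hab
    have hy' := lt_of_lt_of_eq hy hab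
    apply ZMod.val_injective
    rwa [Nat.mod_eq_of_lt hx', Nat.mod_eq_of_lt hy'] at h
  funext i
  match i with
  | 0 => exact key 0 ha0 h0
  | 1 => exact key 1 ha1 h1

private lemma three_le_of_lt {x y z n : ℕ} (hx : x < n) (hy : y < n) (hz : z < n)
    (hxy : x ≠ y) (hxz : x ≠ z) (hyz : y ≠ z) : 3 ≤ n := by
  have hsub : ({x, y, z} : Finset ℕ) ⊆ Finset.range n := by
    intro m hm
    simp only [Finset.mem_insert, Finset.mem_singleton] at hm
    rcases hm with rfl | rfl | rfl <;> simpa [Finset.mem_range]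
  have hcard : ({x, y, z} : Finset ℕ).card = 3 := by
    rw [Finset.card_insert_of_notMem (by simp [hxy, hxz]),
      Finset.card_insert_of_notMem (by simp [hyz]), Finset.card_singleton]
  simpa [hcard] using Finset.card_le_card hsub

private lemma four_le_of_lt {x y z w n : ℕ} (hx : x < n) (hy : y < n) (hz : z < n) (hw : w < n)
    (hxy : x ≠ y) (hxz : x ≠ z) (hxw : x ≠ w) (hyz : y ≠ z) (hyw : y ≠ w) (hzw : z ≠ w) :
    4 ≤ n := by
  have hsub : ({x, y, z, w} : Finset ℕ) ⊆ Finset.range n := by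
    intro m hm
    simp only [Finset.mem_insert, Finset.mem_singleton] at hm
    rcases hm with rfl | rfl | rfl | rfl <;> simpa [Finset.mem_range]
  have hcard : ({x, y, z, w} : Finset ℕ).card = 4 := by
    rw [Finset.card_insert_of_notMem (by simp [hxy, hxz, hxw]),
      Finset.card_insert_of_notMem (by simp [hyz, hyw]),
      Finset.card_insert_of_notMem (by simp [hzw]), Finset.card_singleton]
  simpa [hcard] using Finset.card_le_card hsub
private lemma sncard2 {α : Type*} {s : Set α} {x y : α} (h : s ⊆ {x, y}) : s.ncard ≤ 2 := by
  refine le_trans (Set.ncard_le_ncard h ((Set.finite_singleton y).insert x)) ?_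
  refine le_trans (Set.ncard_insert_le _ _) ?_
  simp [Set.ncard_singleton]

private lemma sncard3 {α : Type*} {s : Set α} {x y z : α} (h : s ⊆ {x, y, z}) : s.ncard ≤ 3 := by
  refine le_trans (Set.ncard_le_ncard h (((Set.finite_singleton z).insert y).insert x)) ?_
  refine le_trans (Set.ncard_insert_le _ _) ?_
  have := sncard2 (s := ({y, z} : Set α)) (x := y) (y := z) (by rfl)
  omega

private lemma sncard4 {α : Type*} {s : Set α} {x y z w : α} (h : s ⊆ {x, y, z, w}) :
    s.ncard ≤ 4 := by
  refine le_trans (Set.ncard_le_ncard h ((((Set.finite_singleton w).insert z).insert y).insert x)) ?_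
  refine le_trans (Set.ncard_insert_le _ _) ?_
  have := sncard3 (s := ({y, z, w} : Set α)) (x := y) (y := z) (z := w) (by rfl)
  omega

private lemma sncard1 {α : Type*} {s : Set α} {x : α} (h : s ⊆ {x}) : s.ncard ≤ 1 := by
  refine le_trans (Set.ncard_le_ncard h (Set.finite_singleton x)) ?_
  simp [Set.ncard_singleton]
private lemma card_mod (m k p : ℕ) (hm : 0 < m) (hp : p < k) :
    Nat.card {z : ZMod (m * k) // z.val % k = p} = m := by
  have hk : 0 < k := lt_of_le_of_lt (Nat.zero_le p) hp
  haveI : NeZero (m * k) := ⟨(Nat.mul_pos hm hk).ne'⟩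
  have hlt : ∀ j : Fin m, p + k * j.1 < m * k := by
    intro j
    calc p + k * j.1 < k + k * j.1 := by omega
    _ = k * (j.1 + 1) := by ring
    _ ≤ k * m := Nat.mul_le_mul_left _ j.2
    _ = m * k := Nat.mul_comm _ _
  have e : {z : ZMod (m * k) // z.val % k = p} ≃ Fin m := {
    toFun := fun z => ⟨z.1.val / k, (Nat.div_lt_iff_lt_mul hk).mpr
      (by simpa [Nat.mul_comm] using z.1.val_lt)⟩
    invFun := fun j => ⟨((p + k * j.1 : ℕ) : ZMod (m * k)), by
      rw [ZMod.val_cast_of_lt (hlt j), Nat.add_mul_mod_self_left, Nat.mod_eq_of_lt hp]⟩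
    left_inv := fun z => by
      apply Subtype.ext
      apply ZMod.val_injective
      rw [ZMod.val_cast_of_lt]
      · have h1 := Nat.div_add_mod z.1.val k
        have h2 := z.2
        generalize k * (z.1.val / k) = t at *
        omega
      · have h1 := Nat.div_add_mod z.1.val k
        have h2 := z.2
        have h3 := z.1.val_lt
        generalize hg : k * (z.1.val / k) = t at *
        omega
    right_inv := fun j => by
      apply Fin.ext
      show (((p + k * j.1 : ℕ) : ZMod (m * k))).val / k = j.1
      rw [ZMod.val_cast_of_lt (hlt j), Nat.add_mul_div_left _ _ hk, Nat.div_eq_of_lt hp,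
        Nat.zero_add] }
  rw [Nat.card_congr e, Nat.card_eq_fintype_card, Fintype.card_fin]

private lemma card_split (a b : Fin 2 → ℕ) (P : ZMod (a 0 * b 0) → Prop)
    (Q : ZMod (a 1 * b 1) → Prop) :
    Nat.card {x : ∀ i, ZMod (a i * b i) // P (x 0) ∧ Q (x 1)} =
      Nat.card {z // P z} * Nat.card {w // Q w} := by
  rw [← Nat.card_prod]
  exact Nat.card_congr
    ((Equiv.subtypeEquiv (piFinTwoEquiv (fun i => ZMod (a i * b i))) (fun x => Iff.rfl)).trans
      Equiv.subtypeProdEquivProd)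

private lemma ncard_col (a b : Fin 2 → ℕ) (ha : ∀ i, 0 < a i) (p : ℕ) (hp : p < b 0) :
    {x : ∀ i, ZMod (a i * b i) | (x 0).val % b 0 = p}.ncard = a 0 * (a 1 * b 1) := by
  have h1 : {x : ∀ i, ZMod (a i * b i) | (x 0).val % b 0 = p}.ncard
      = Nat.card {x : ∀ i, ZMod (a i * b i) // (x 0).val % b 0 = p ∧ True} := by
    rw [← Nat.card_coe_set_eq]
    exact Nat.card_congr (Equiv.subtypeEquivRight (by simp))
  rw [h1, card_split a b (fun z => z.val % b 0 = p) (fun _ => True),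
    card_mod (a 0) (b 0) p (ha 0) hp,
    Nat.card_congr (Equiv.subtypeUnivEquiv (fun _ => trivial)), Nat.card_zmod]

private lemma ncard_row (a b : Fin 2 → ℕ) (ha : ∀ i, 0 < a i) (t : ℕ) (ht : t < b 1) :
    {x : ∀ i, ZMod (a i * b i) | (x 1).val % b 1 = t}.ncard = a 0 * b 0 * a 1 := by
  have h1 : {x : ∀ i, ZMod (a i * b i) | (x 1).val % b 1 = t}.ncard
      = Nat.card {x : ∀ i, ZMod (a i * b i) // True ∧ (x 1).val % b 1 = t} := by
    rw [← Nat.card_coe_set_eq]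
    exact Nat.card_congr (Equiv.subtypeEquivRight (by simp))
  rw [h1, card_split a b (fun _ => True) (fun w => w.val % b 1 = t),
    card_mod (a 1) (b 1) t (ha 1) ht,
    Nat.card_congr (Equiv.subtypeUnivEquiv (fun _ => trivial)), Nat.card_zmod]

private lemma ncard_class (a b : Fin 2 → ℕ) (ha : ∀ i, 0 < a i) (p t : ℕ) (hp : p < b 0)
    (ht : t < b 1) :
    {x : ∀ i, ZMod (a i * b i) | (x 0).val % b 0 = p ∧ (x 1).val % b 1 = t}.ncard
      = a 0 * a 1 := by
  have h1 : {x : ∀ i, ZMod (a i * b i) | (x 0).val % b 0 = p ∧ (x 1).val % b 1 = t}.ncard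
      = Nat.card {x : ∀ i, ZMod (a i * b i) // (x 0).val % b 0 = p ∧ (x 1).val % b 1 = t} :=
    (Nat.card_coe_set_eq _).symm
  rw [h1, card_split a b (fun z => z.val % b 0 = p) (fun w => w.val % b 1 = t),
    card_mod (a 0) (b 0) p (ha 0) hp, card_mod (a 1) (b 1) t (ha 1) ht]
set_option maxHeartbeats 1000000 in
private lemma upperB (a b : Fin 2 → ℕ) (ha : ∀ i, 0 < a i) (hb0 : 2 ≤ b 0) (hb : b 0 ≤ b 1)
    (D : Set (∀ i, ZMod (a i * b i)))
    (hdom : IsDomSet (multipartiteProd 2 a b) D)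
    (hminl : ∀ D' ⊂ D, ¬ IsDomSet (multipartiteProd 2 a b) D') :
    D.ncard ≤ a 0 * a 1 * b 1 := by
  haveI := nz a b ha hb0 hb
  haveI : Finite (∀ i, ZMod (a i * b i)) := by infer_instance
  have hb1 : 2 ≤ b 1 := le_trans hb0 hb
  have mlt0 : ∀ x : (∀ i, ZMod (a i * b i)), (x 0).val % b 0 < b 0 :=
    fun x => Nat.mod_lt _ (by omega)
  have mlt1 : ∀ x : (∀ i, ZMod (a i * b i)), (x 1).val % b 1 < b 1 :=
    fun x => Nat.mod_lt _ (by omega)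
  -- domination in residue form
  have cover : ∀ v, v ∈ D ∨ ∃ d ∈ D,
      (d 0).val % b 0 ≠ (v 0).val % b 0 ∧ (d 1).val % b 1 ≠ (v 1).val % b 1 := by
    intro v
    rcases hdom v with h | ⟨d, hd, hadj⟩
    · exact Or.inl h
    · have := (adj_iff a b d v).mp hadj.symm
      exact Or.inr ⟨d, hd, this.1, this.2⟩
  -- minimality dichotomy
  have key : ∀ d ∈ D,
      (∀ d' ∈ D, (d' 0).val % b 0 = (d 0).val % b 0 ∨ (d' 1).val % b 1 = (d 1).val % b 1)
      ∨ (∃ v, v ∉ D ∧ (v 0).val % b 0 ≠ (d 0).val % b 0 ∧ (v 1).val % b 1 ≠ (d 1).val % b 1 ∧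
          ∀ d' ∈ D, d' ≠ d →
            ((d' 0).val % b 0 = (v 0).val % b 0 ∨ (d' 1).val % b 1 = (v 1).val % b 1)) := by
    intro d hd
    have hss : D \ {d} ⊂ D := by
      constructor
      · exact Set.diff_subset
      · intro hsub
        exact (hsub hd).2 rfl
    have hnd := hminl _ hss
    rw [IsDomSet] at hnd
    push_neg at hnd
    obtain ⟨v, hv1, hv2⟩ := hnd
    by_cases hvd : v = d
    · left
      intro d' hd'
      by_cases hdd : d' = d
      · exact Or.inl (by rw [hdd])
      · have hna := hv2 d' ⟨hd', hdd⟩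
        have : ¬((v 0).val % b 0 ≠ (d' 0).val % b 0 ∧ (v 1).val % b 1 ≠ (d' 1).val % b 1) :=
          fun hc => hna ((adj_iff a b v d').mpr hc)
        subst hvd
        rcases not_and_or.mp this with h | h
        · exact Or.inl (by omega)
        · exact Or.inr (by omega)
    · right
      have hvD : v ∉ D := fun h => hv1 ⟨h, hvd⟩
      rcases hdom v with h | ⟨d'', hd'', hadj⟩
      · exact absurd h hvD
      · have hd''d : d'' = d := by
          by_contra hne
          exact hv2 d'' ⟨hd'', hne⟩ hadj
        subst hd''d
        have hA := (adj_iff a b v d'').mp hadj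
        refine ⟨v, hvD, hA.1, hA.2, ?_⟩
        intro d' hd' hne
        have hna := hv2 d' ⟨hd', hne⟩
        have : ¬((v 0).val % b 0 ≠ (d' 0).val % b 0 ∧ (v 1).val % b 1 ≠ (d' 1).val % b 1) :=
          fun hc => hna ((adj_iff a b v d').mpr hc)
        rcases not_and_or.mp this with h | h
        · exact Or.inl (by omega)
        · exact Or.inr (by omega)
  by_cases hI : ∃ ds ∈ D, ∀ d' ∈ D,
      (d' 0).val % b 0 = (ds 0).val % b 0 ∨ (d' 1).val % b 1 = (ds 1).val % b 1
  · -- CASE I : some vertex has only "crossing" companions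
    obtain ⟨ds, hds, hown⟩ := hI
    by_cases hcol : ∀ d ∈ D, (d 0).val % b 0 = (ds 0).val % b 0
    · calc D.ncard ≤ {x : ∀ i, ZMod (a i * b i) | (x 0).val % b 0 = (ds 0).val % b 0}.ncard :=
            Set.ncard_le_ncard hcol
      _ = a 0 * (a 1 * b 1) := ncard_col a b ha _ (mlt0 ds)
      _ = a 0 * a 1 * b 1 := by ring
    by_cases hrow : ∀ d ∈ D, (d 1).val % b 1 = (ds 1).val % b 1
    · calc D.ncard ≤ {x : ∀ i, ZMod (a i * b i) | (x 1).val % b 1 = (ds 1).val % b 1}.ncard :=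
            Set.ncard_le_ncard hrow
      _ = a 0 * b 0 * a 1 := ncard_row a b ha _ (mlt1 ds)
      _ = a 0 * a 1 * b 0 := by ring
      _ ≤ a 0 * a 1 * b 1 := Nat.mul_le_mul_left _ hb
    push_neg at hcol hrow
    obtain ⟨sh, hshD, hsh0⟩ := hcol
    obtain ⟨st, hstD, hst1⟩ := hrow
    have hsh1 : (sh 1).val % b 1 = (ds 1).val % b 1 := (hown sh hshD).resolve_left hsh0
    have hst0 : (st 0).val % b 0 = (ds 0).val % b 0 := (hown st hstD).resolve_right hst1
    have hinj : ∀ d1 ∈ D, ∀ d2 ∈ D, (d1 0).val % b 0 = (d2 0).val % b 0 →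
        (d1 1).val % b 1 = (d2 1).val % b 1 →
        ¬((d1 0).val % b 0 = (ds 0).val % b 0 ∧ (d1 1).val % b 1 = (ds 1).val % b 1) →
        d1 = d2 := by
      intro d1 h1 d2 h2 he0 he1 hne
      by_contra hne12
      rcases key d1 h1 with hown1 | ⟨v, _, hv0, hv1, hblock⟩
      · rcases hown d1 h1 with hc | hc
        · have ht1 : (d1 1).val % b 1 ≠ (ds 1).val % b 1 := fun h => hne ⟨hc, h⟩
          rcases hown1 sh hshD with h | h
          · omega
          · omega
        · have ht0 : (d1 0).val % b 0 ≠ (ds 0).val % b 0 := fun h => hne ⟨h, hc⟩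
          rcases hown1 st hstD with h | h
          · omega
          · omega
      · rcases hblock d2 h2 (Ne.symm hne12) with h | h
        · omega
        · omega
    rcases Nat.lt_or_ge (a 0 * a 1) 2 with hA1 | hA2
    · -- A = 1
      have hA : a 0 * a 1 = 1 := by
        have := Nat.mul_pos (ha 0) (ha 1)
        omega
      have ha0 : a 0 = 1 := by
        have h1 := ha 1
        have h0 := ha 0
        by_contra h
        have h3 : 2 * 1 ≤ a 0 * a 1 := Nat.mul_le_mul (by omega) h1
        omega
      have ha1 : a 1 = 1 := by
        have h1 := ha 1
        have h0 := ha 0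
        by_contra h
        have h3 : 1 * 2 ≤ a 0 * a 1 := Nat.mul_le_mul h0 (by omega)
        omega
      have inj1' : ∀ x y : (∀ i, ZMod (a i * b i)), (x 0).val % b 0 = (y 0).val % b 0 →
          (x 1).val % b 1 = (y 1).val % b 1 → x = y :=
        fun x y h0 h1 => inj1 a b ha hb0 hb ha0 ha1 x y h0 h1
      -- st is external
      have hstext := (key st hstD).resolve_left (by
        intro hown'
        rcases hown' sh hshD with h | h
        · omega
        · omega)
      obtain ⟨v1, hv1D, hv10, hv11, hblk1⟩ := hstext
      have hdsst : ds ≠ st := by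
        intro h
        rw [h] at hst1
        omega
      have hv1t : (v1 1).val % b 1 = (ds 1).val % b 1 := by
        rcases hblk1 ds hds hdsst with h | h
        · omega
        · omega
      have hDc : ∀ d ∈ D, (d 1).val % b 1 ≠ (ds 1).val % b 1 → d = st := by
        intro d hd hd1
        by_contra hne
        have hd0 : (d 0).val % b 0 = (ds 0).val % b 0 := (hown d hd).resolve_right hd1
        rcases hblk1 d hd hne with h | h
        · omega
        · omega
      -- sh is external
      have hshext := (key sh hshD).resolve_left (by
        intro hown'
        rcases hown' st hstD with h | h
        · omega
        · omega)
      obtain ⟨v2, hv2D, hv20, hv21, hblk2⟩ := hshext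
      have hdssh : ds ≠ sh := by
        intro h
        rw [h] at hsh0
        omega
      have hv2p : (v2 0).val % b 0 = (ds 0).val % b 0 := by
        rcases hblk2 ds hds hdssh with h | h
        · omega
        · omega
      have hDr : ∀ d ∈ D, (d 0).val % b 0 ≠ (ds 0).val % b 0 → d = sh := by
        intro d hd hd0
        by_contra hne
        have hd1 : (d 1).val % b 1 = (ds 1).val % b 1 := (hown d hd).resolve_left hd0
        rcases hblk2 d hd hne with h | h
        · omega
        · omega
      have hDsub : D ⊆ {ds, st, sh} := by
        intro d hd
        by_cases h1' : (d 1).val % b 1 = (ds 1).val % b 1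
        · by_cases h0' : (d 0).val % b 0 = (ds 0).val % b 0
          · exact Or.inl (inj1' d ds h0' h1')
          · exact Or.inr (Or.inr (hDr d hd h0'))
        · exact Or.inr (Or.inl (hDc d hd h1'))
      have hcard : D.ncard ≤ 3 := sncard3 hDsub
      -- b 0 ≥ 3 via ds0, sh0, v1_0
      have hv1sh : (v1 0).val % b 0 ≠ (sh 0).val % b 0 := by
        intro h
        have : v1 = sh := inj1' v1 sh h (by omega)
        rw [this] at hv1D
        exact hv1D hshD
      have hb03 : 3 ≤ b 0 :=
        three_le_of_lt (mlt0 ds) (mlt0 sh) (mlt0 v1) (by omega) (by omega) (by omega)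
      rw [ha0, ha1]
      have : 3 ≤ b 1 := le_trans hb03 hb
      omega
    · -- A ≥ 2
      obtain ⟨m1, hm1⟩ : ∃ m, b 1 = m + 1 := ⟨b 1 - 1, by omega⟩
      obtain ⟨m0, hm0⟩ : ∃ m, b 0 = m + 1 := ⟨b 0 - 1, by omega⟩
      have bound1 : (D ∩ {x : ∀ i, ZMod (a i * b i) | (x 0).val % b 0 = (ds 0).val % b 0 ∧
          (x 1).val % b 1 = (ds 1).val % b 1}).ncard ≤ a 0 * a 1 := by
        refine le_of_le_of_eq (Set.ncard_le_ncard Set.inter_subset_right) ?_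
        exact ncard_class a b ha _ _ (mlt0 ds) (mlt1 ds)
      have bound2 : (D \ {x : ∀ i, ZMod (a i * b i) | (x 0).val % b 0 = (ds 0).val % b 0 ∧
          (x 1).val % b 1 = (ds 1).val % b 1}).ncard ≤ m1 + m0 := by
        set Cpt := {x : ∀ i, ZMod (a i * b i) | (x 0).val % b 0 = (ds 0).val % b 0 ∧
          (x 1).val % b 1 = (ds 1).val % b 1} with hCpt
        have hinjOn : Set.InjOn (fun d : (∀ i, ZMod (a i * b i)) =>
            ((d 0).val % b 0, (d 1).val % b 1)) (D \ Cpt) := by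
          intro d1 hd1 d2 hd2 h
          have h0 : (d1 0).val % b 0 = (d2 0).val % b 0 := congrArg Prod.fst h
          have h1 : (d1 1).val % b 1 = (d2 1).val % b 1 := congrArg Prod.snd h
          exact hinj d1 hd1.1 d2 hd2.1 h0 h1 hd1.2
        rw [← Set.ncard_image_of_injOn hinjOn]
        set CS : Finset (ℕ × ℕ) :=
          (({(ds 0).val % b 0} : Finset ℕ) ×ˢ ((Finset.range (b 1)).erase ((ds 1).val % b 1)))
          ∪ (((Finset.range (b 0)).erase ((ds 0).val % b 0)) ×ˢ
              ({(ds 1).val % b 1} : Finset ℕ)) with hCS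
        have hsubF : (fun d : (∀ i, ZMod (a i * b i)) =>
            ((d 0).val % b 0, (d 1).val % b 1)) '' (D \ Cpt) ⊆ ↑CS := by
          rintro pr ⟨d, ⟨hdD, hdC⟩, rfl⟩
          have hnotboth : ¬((d 0).val % b 0 = (ds 0).val % b 0 ∧
              (d 1).val % b 1 = (ds 1).val % b 1) := hdC
          simp only [hCS, Finset.coe_union, Set.mem_union, Finset.coe_product,
            Set.mem_prod, Finset.mem_coe, Finset.mem_singleton, Finset.mem_erase,
            Finset.mem_range]
          rcases hown d hdD with h | h
          · exact Or.inl ⟨h, fun hc => hnotboth ⟨h, hc⟩, mlt1 d⟩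
          · exact Or.inr ⟨⟨fun hc => hnotboth ⟨hc, h⟩, mlt0 d⟩, h⟩
        refine le_trans (le_of_le_of_eq (Set.ncard_le_ncard hsubF (CS.finite_toSet))
          (Set.ncard_coe_finset CS)) ?_
        refine le_trans (Finset.card_union_le _ _) ?_
        rw [Finset.card_product, Finset.card_product, Finset.card_singleton,
          Finset.card_erase_of_mem (Finset.mem_range.mpr (mlt1 ds)),
          Finset.card_erase_of_mem (Finset.mem_range.mpr (mlt0 ds)),
          Finset.card_range, Finset.card_range, Finset.card_singleton]
        omega
      calc D.ncard = ((D ∩ {x : ∀ i, ZMod (a i * b i) |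
              (x 0).val % b 0 = (ds 0).val % b 0 ∧ (x 1).val % b 1 = (ds 1).val % b 1})
            ∪ (D \ {x : ∀ i, ZMod (a i * b i) |
              (x 0).val % b 0 = (ds 0).val % b 0 ∧ (x 1).val % b 1 = (ds 1).val % b 1})).ncard :=
          by rw [Set.inter_union_diff]
      _ ≤ (D ∩ {x : ∀ i, ZMod (a i * b i) |
              (x 0).val % b 0 = (ds 0).val % b 0 ∧ (x 1).val % b 1 = (ds 1).val % b 1}).ncard
            + (D \ {x : ∀ i, ZMod (a i * b i) |
              (x 0).val % b 0 = (ds 0).val % b 0 ∧ (x 1).val % b 1 = (ds 1).val % b 1}).ncard :=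
          Set.ncard_union_le _ _
      _ ≤ (a 0 * a 1) + (m1 + m0) := add_le_add bound1 bound2
      _ ≤ a 0 * a 1 * b 1 := by
          have h2 : 2 * m1 ≤ (a 0 * a 1) * m1 := Nat.mul_le_mul_right _ hA2
          have h3 : (a 0 * a 1) * b 1 = (a 0 * a 1) * m1 + (a 0 * a 1) := by
            rw [hm1]; ring
          clear * - h2 h3 hm0 hm1 hb
          omega
  · -- CASE II : every vertex of D is "external"
    push_neg at hI
    have ext : ∀ d ∈ D, ∃ v, v ∉ D ∧ (v 0).val % b 0 ≠ (d 0).val % b 0 ∧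
        (v 1).val % b 1 ≠ (d 1).val % b 1 ∧
        ∀ d' ∈ D, d' ≠ d →
          ((d' 0).val % b 0 = (v 0).val % b 0 ∨ (d' 1).val % b 1 = (v 1).val % b 1) :=
      fun d hd => (key d hd).resolve_left (by
        intro hall
        obtain ⟨d', hd'D, hne0, hne1⟩ := hI d hd
        rcases hall d' hd'D with h | h <;> omega)
    rcases Set.eq_empty_or_nonempty D with rfl | ⟨dr, hdr⟩
    · simp [Set.ncard_empty]
    obtain ⟨v, hvD, hv0, hv1, hblk⟩ := ext dr hdr
    have injII : ∀ d1 ∈ D, ∀ d2 ∈ D, (d1 0).val % b 0 = (d2 0).val % b 0 →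
        (d1 1).val % b 1 = (d2 1).val % b 1 → d1 = d2 := by
      intro d1 h1 d2 h2 e0 e1
      by_contra hne
      obtain ⟨v', _, hv'0, hv'1, hblk'⟩ := ext d1 h1
      rcases hblk' d2 h2 (Ne.symm hne) with h | h
      · omega
      · omega
    set Dc := {d | d ∈ D ∧ (d 0).val % b 0 = (v 0).val % b 0} with hDcdef
    set Dr := {d | d ∈ D ∧ (d 1).val % b 1 = (v 1).val % b 1 ∧
        (d 0).val % b 0 ≠ (v 0).val % b 0} with hDrdef
    have hsplitD : D ⊆ insert dr (Dc ∪ Dr) := by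
      intro d hd
      by_cases hddr : d = dr
      · exact Or.inl hddr
      · rcases hblk d hd hddr with h | h
        · exact Or.inr (Or.inl ⟨hd, h⟩)
        · by_cases h0 : (d 0).val % b 0 = (v 0).val % b 0
          · exact Or.inr (Or.inl ⟨hd, h0⟩)
          · exact Or.inr (Or.inr ⟨hd, h, h0⟩)
    have no3c : ∀ c1 ∈ Dc, ∀ c2 ∈ Dc, ∀ c3 ∈ Dc,
        c1 ≠ c2 → c1 ≠ c3 → c2 ≠ c3 → False := by
      rintro c1 ⟨hc1D, hc1⟩ c2 ⟨hc2D, hc2⟩ c3 ⟨hc3D, hc3⟩ h12 h13 h23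
      obtain ⟨v', _, hv'0, hv'1, hblk'⟩ := ext c1 hc1D
      have h2' : (c2 1).val % b 1 = (v' 1).val % b 1 := by
        rcases hblk' c2 hc2D (Ne.symm h12) with h | h
        · omega
        · omega
      have h3' : (c3 1).val % b 1 = (v' 1).val % b 1 := by
        rcases hblk' c3 hc3D (Ne.symm h13) with h | h
        · omega
        · omega
      exact h23 (injII c2 hc2D c3 hc3D (by omega) (by omega))
    have no3r : ∀ c1 ∈ Dr, ∀ c2 ∈ Dr, ∀ c3 ∈ Dr,
        c1 ≠ c2 → c1 ≠ c3 → c2 ≠ c3 → False := by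
      rintro c1 ⟨hc1D, hc1, hc1'⟩ c2 ⟨hc2D, hc2, hc2'⟩ c3 ⟨hc3D, hc3, hc3'⟩ h12 h13 h23
      obtain ⟨v', _, hv'0, hv'1, hblk'⟩ := ext c1 hc1D
      have h2' : (c2 0).val % b 0 = (v' 0).val % b 0 := by
        rcases hblk' c2 hc2D (Ne.symm h12) with h | h
        · omega
        · omega
      have h3' : (c3 0).val % b 0 = (v' 0).val % b 0 := by
        rcases hblk' c3 hc3D (Ne.symm h13) with h | h
        · omega
        · omega
      exact h23 (injII c2 hc2D c3 hc3D (by omega) (by omega))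
    have hDc2 : Dc.ncard ≤ 2 := by
      by_contra hgt
      push_neg at hgt
      obtain ⟨x, hx, y, hy, z, hz, hxy, hxz, hyz⟩ := (Set.two_lt_ncard).mp hgt
      exact no3c x hx y hy z hz hxy hxz hyz
    have hDr2 : Dr.ncard ≤ 2 := by
      by_contra hgt
      push_neg at hgt
      obtain ⟨x, hx, y, hy, z, hz, hxy, hxz, hyz⟩ := (Set.two_lt_ncard).mp hgt
      exact no3r x hx y hy z hz hxy hxz hyz
    have hcard5 : D.ncard ≤ 1 + (Dc.ncard + Dr.ncard) := by
      refine le_trans (Set.ncard_le_ncard hsplitD) ?_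
      refine le_trans (Set.ncard_insert_le _ _) ?_
      have := Set.ncard_union_le Dc Dr
      omega
    rcases Nat.lt_or_ge (a 0 * a 1) 2 with hA1 | hA2
    · -- A = 1 : detailed analysis
      have ha0 : a 0 = 1 := by
        have h1 := ha 1
        have h0 := ha 0
        by_contra h
        have h3 : 2 * 1 ≤ a 0 * a 1 := Nat.mul_le_mul (by omega) h1
        omega
      have ha1 : a 1 = 1 := by
        have h1 := ha 1
        have h0 := ha 0
        by_contra h
        have h3 : 1 * 2 ≤ a 0 * a 1 := Nat.mul_le_mul h0 (by omega)
        omega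
      have inj1' : ∀ x y : (∀ i, ZMod (a i * b i)), (x 0).val % b 0 = (y 0).val % b 0 →
          (x 1).val % b 1 = (y 1).val % b 1 → x = y :=
        fun x y h0 h1 => inj1 a b ha hb0 hb ha0 ha1 x y h0 h1
      have hgoal : ∀ k, D.ncard ≤ k → k ≤ b 1 → D.ncard ≤ a 0 * a 1 * b 1 := by
        intro k h1 h2
        have he : a 0 * a 1 * b 1 = b 1 := by
          rw [ha0, ha1]
          ring
        omega
      have hvltc : ∀ c ∈ Dc, (c 1).val % b 1 ≠ (v 1).val % b 1 := by
        rintro c ⟨hcD, hc0⟩ h1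
        have hcv : c = v := inj1' c v hc0 h1
        rw [hcv] at hcD
        exact hvD hcD
      by_cases h2c : ∃ c1 ∈ Dc, ∃ c2 ∈ Dc, c1 ≠ c2
      · obtain ⟨c1, hc1, c2, hc2, h12⟩ := h2c
        have hDcsub : Dc ⊆ {c1, c2} := by
          intro c hc
          by_contra hno
          simp only [Set.mem_insert_iff, Set.mem_singleton_iff] at hno
          push_neg at hno
          exact no3c c1 hc1 c2 hc2 c hc h12 (Ne.symm hno.1) (Ne.symm hno.2)
        have hy1w : (c1 1).val % b 1 ≠ (v 1).val % b 1 := hvltc c1 hc1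
        have hy2w : (c2 1).val % b 1 ≠ (v 1).val % b 1 := hvltc c2 hc2
        obtain ⟨hc1D, hc1u⟩ := hc1
        obtain ⟨hc2D, hc2u⟩ := hc2
        have hy12 : (c1 1).val % b 1 ≠ (c2 1).val % b 1 :=
          fun h => h12 (injII c1 hc1D c2 hc2D (by omega) h)
        obtain ⟨w1, hw1D, hw10, hw11, hblkc1⟩ := ext c1 hc1D
        have hw1c2 : (c2 1).val % b 1 = (w1 1).val % b 1 := by
          rcases hblkc1 c2 hc2D (Ne.symm h12) with h | h
          · omega
          · omega
        obtain ⟨w2, hw2D, hw20, hw21, hblkc2⟩ := ext c2 hc2D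
        have hw2c1 : (c1 1).val % b 1 = (w2 1).val % b 1 := by
          rcases hblkc2 c1 hc1D h12 with h | h
          · omega
          · omega
        by_cases h2r : ∃ r1 ∈ Dr, ∃ r2 ∈ Dr, r1 ≠ r2
        · -- two column-elements and two row-elements : impossible
          exfalso
          obtain ⟨r1, hr1, r2, hr2, hr12⟩ := h2r
          obtain ⟨hr1D, hr1w, hr1u⟩ := hr1
          obtain ⟨hr2D, hr2w, hr2u⟩ := hr2
          have hner1c1 : r1 ≠ c1 := by
            intro h
            rw [h] at hr1u
            omega
          have hner2c1 : r2 ≠ c1 := by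
            intro h
            rw [h] at hr2u
            omega
          have hx1 : (r1 0).val % b 0 = (w1 0).val % b 0 := by
            rcases hblkc1 r1 hr1D hner1c1 with h | h
            · exact h
            · omega
          have hx2 : (r2 0).val % b 0 = (w1 0).val % b 0 := by
            rcases hblkc1 r2 hr2D hner2c1 with h | h
            · exact h
            · omega
          exact hr12 (injII r1 hr1D r2 hr2D (by omega) (by omega))
        · push_neg at h2r
          by_cases hrne : Dr.Nonempty
          · -- shape (2,1) : |D| ≤ 4 and b 1 ≥ 4
            obtain ⟨r1, hr1⟩ := hrne
            obtain ⟨hr1D, hr1w, hr1u⟩ := hr1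
            have hDrsub : Dr ⊆ {r1} := fun r hr => h2r r hr r1 ⟨hr1D, hr1w, hr1u⟩
            have hDsub : D ⊆ {dr, c1, c2, r1} := by
              intro d hd
              rcases hsplitD hd with h | h
              · exact Or.inl h
              rcases h with h | h
              · rcases hDcsub h with h' | h'
                · exact Or.inr (Or.inl h')
                · exact Or.inr (Or.inr (Or.inl h'))
              · exact Or.inr (Or.inr (Or.inr (hDrsub h)))
            have hner1c1 : r1 ≠ c1 := by
              intro h
              rw [h] at hr1u
              omega
            have hner1c2 : r1 ≠ c2 := by
              intro h
              rw [h] at hr1u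
              omega
            have hnedrc1 : dr ≠ c1 := by
              intro h
              rw [h] at hv0
              omega
            have hnedrc2 : dr ≠ c2 := by
              intro h
              rw [h] at hv0
              omega
            have hw1r1 : (r1 0).val % b 0 = (w1 0).val % b 0 := by
              rcases hblkc1 r1 hr1D hner1c1 with h | h
              · exact h
              · omega
            have hw2r1 : (r1 0).val % b 0 = (w2 0).val % b 0 := by
              rcases hblkc2 r1 hr1D hner1c2 with h | h
              · exact h
              · omega
            have hdrw1 := hblkc1 dr hdr hnedrc1
            have hdrw2 := hblkc2 dr hdr hnedrc2
            have hrry1 : (dr 1).val % b 1 ≠ (c1 1).val % b 1 := by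
              intro hrr
              have hdq : (dr 0).val % b 0 = (w1 0).val % b 0 := by
                rcases hdrw1 with h | h
                · exact h
                · omega
              have hdw : dr = w2 := inj1' dr w2 (by omega) (by omega)
              rw [hdw] at hdr
              exact hw2D hdr
            have hrry2 : (dr 1).val % b 1 ≠ (c2 1).val % b 1 := by
              intro hrr
              have hdq : (dr 0).val % b 0 = (w2 0).val % b 0 := by
                rcases hdrw2 with h | h
                · exact h
                · omega
              have hdw : dr = w1 := inj1' dr w1 (by omega) (by omega)
              rw [hdw] at hdr
              exact hw1D hdr
            have hb14 : 4 ≤ b 1 := four_le_of_lt (mlt1 v) (mlt1 c1) (mlt1 c2) (mlt1 dr)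
              (Ne.symm hy1w) (Ne.symm hy2w) hv1 hy12 (Ne.symm hrry1) (Ne.symm hrry2)
            exact hgoal 4 (sncard4 hDsub) hb14
          · -- shape (2,0) : |D| ≤ 3 and b 1 ≥ 3
            have hDrE : Dr = ∅ := Set.not_nonempty_iff_eq_empty.mp hrne
            have hDsub : D ⊆ {dr, c1, c2} := by
              intro d hd
              rcases hsplitD hd with h | h
              · exact Or.inl h
              rcases h with h | h
              · rcases hDcsub h with h' | h'
                · exact Or.inr (Or.inl h')
                · exact Or.inr (Or.inr h')
              · rw [hDrE] at h
                exact absurd h (Set.notMem_empty d)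
            have hb13 : 3 ≤ b 1 := three_le_of_lt (mlt1 v) (mlt1 c1) (mlt1 c2)
              (Ne.symm hy1w) (Ne.symm hy2w) hy12
            exact hgoal 3 (sncard3 hDsub) hb13
      · push_neg at h2c
        by_cases h2r : ∃ r1 ∈ Dr, ∃ r2 ∈ Dr, r1 ≠ r2
        · obtain ⟨r1, hr1, r2, hr2, hr12⟩ := h2r
          have hDrsub : Dr ⊆ {r1, r2} := by
            intro r hr
            by_contra hno
            simp only [Set.mem_insert_iff, Set.mem_singleton_iff] at hno
            push_neg at hno
            exact no3r r1 hr1 r2 hr2 r hr hr12 (Ne.symm hno.1) (Ne.symm hno.2)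
          obtain ⟨hr1D, hr1w, hr1u⟩ := hr1
          obtain ⟨hr2D, hr2w, hr2u⟩ := hr2
          have hx12 : (r1 0).val % b 0 ≠ (r2 0).val % b 0 :=
            fun h => hr12 (injII r1 hr1D r2 hr2D h (by omega))
          obtain ⟨w1, hw1D, hw10, hw11, hblkr1⟩ := ext r1 hr1D
          have hw1r2 : (r2 0).val % b 0 = (w1 0).val % b 0 := by
            rcases hblkr1 r2 hr2D (Ne.symm hr12) with h | h
            · exact h
            · omega
          obtain ⟨w2, hw2D, hw20, hw21, hblkr2⟩ := ext r2 hr2D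
          have hw2r1 : (r1 0).val % b 0 = (w2 0).val % b 0 := by
            rcases hblkr2 r1 hr1D hr12 with h | h
            · exact h
            · omega
          have hnedrr1 : dr ≠ r1 := by
            intro h
            rw [h] at hv1
            omega
          have hnedrr2 : dr ≠ r2 := by
            intro h
            rw [h] at hv1
            omega
          by_cases hcne : Dc.Nonempty
          · -- shape (1,2) : |D| ≤ 4 and b 0 ≥ 4
            obtain ⟨c1, hc1⟩ := hcne
            have hDcsub : Dc ⊆ {c1} := fun c hc => h2c c hc c1 hc1
            obtain ⟨hc1D, hc1u⟩ := hc1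
            have hnec1r1 : c1 ≠ r1 := by
              intro h
              rw [h] at hc1u
              omega
            have hnec1r2 : c1 ≠ r2 := by
              intro h
              rw [h] at hc1u
              omega
            have hw1y1 : (c1 1).val % b 1 = (w1 1).val % b 1 := by
              rcases hblkr1 c1 hc1D hnec1r1 with h | h
              · omega
              · exact h
            have hw2y1 : (c1 1).val % b 1 = (w2 1).val % b 1 := by
              rcases hblkr2 c1 hc1D hnec1r2 with h | h
              · omega
              · exact h
            have hdrw1 := hblkr1 dr hdr hnedrr1
            have hdrw2 := hblkr2 dr hdr hnedrr2
            have hdrx1 : (dr 0).val % b 0 ≠ (r1 0).val % b 0 := by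
              intro h
              have hd1 : (dr 1).val % b 1 = (c1 1).val % b 1 := by
                rcases hdrw1 with h' | h'
                · omega
                · omega
              have hdw : dr = w2 := inj1' dr w2 (by omega) (by omega)
              rw [hdw] at hdr
              exact hw2D hdr
            have hdrx2 : (dr 0).val % b 0 ≠ (r2 0).val % b 0 := by
              intro h
              have hd1 : (dr 1).val % b 1 = (c1 1).val % b 1 := by
                rcases hdrw2 with h' | h'
                · omega
                · omega
              have hdw : dr = w1 := inj1' dr w1 (by omega) (by omega)
              rw [hdw] at hdr
              exact hw1D hdr
            have hb04 : 4 ≤ b 0 := four_le_of_lt (mlt0 v) (mlt0 r1) (mlt0 r2) (mlt0 dr)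
              (Ne.symm hr1u) (Ne.symm hr2u) hv0 hx12 (Ne.symm hdrx1) (Ne.symm hdrx2)
            have hDsub : D ⊆ {dr, c1, r1, r2} := by
              intro d hd
              rcases hsplitD hd with h | h
              · exact Or.inl h
              rcases h with h | h
              · exact Or.inr (Or.inl (hDcsub h))
              · rcases hDrsub h with h' | h'
                · exact Or.inr (Or.inr (Or.inl h'))
                · exact Or.inr (Or.inr (Or.inr h'))
            exact hgoal 4 (sncard4 hDsub) (le_trans hb04 hb)
          · -- shape (0,2) : |D| ≤ 3 and b 0 ≥ 3
            have hDcE : Dc = ∅ := Set.not_nonempty_iff_eq_empty.mp hcne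
            have hb03 : 3 ≤ b 0 := three_le_of_lt (mlt0 v) (mlt0 r1) (mlt0 r2)
              (Ne.symm hr1u) (Ne.symm hr2u) hx12
            have hDsub : D ⊆ {dr, r1, r2} := by
              intro d hd
              rcases hsplitD hd with h | h
              · exact Or.inl h
              rcases h with h | h
              · rw [hDcE] at h
                exact absurd h (Set.notMem_empty d)
              · rcases hDrsub h with h' | h'
                · exact Or.inr (Or.inl h')
                · exact Or.inr (Or.inr h')
            exact hgoal 3 (sncard3 hDsub) (le_trans hb03 hb)
        · push_neg at h2r
          by_cases hcne : Dc.Nonempty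
          · obtain ⟨c1, hc1⟩ := hcne
            have hDcsub : Dc ⊆ {c1} := fun c hc => h2c c hc c1 hc1
            by_cases hrne : Dr.Nonempty
            · -- shape (1,1) : |D| ≤ 3 and b 1 ≥ 3
              obtain ⟨r1, hr1⟩ := hrne
              have hDrsub : Dr ⊆ {r1} := fun r hr => h2r r hr r1 hr1
              have hy1w : (c1 1).val % b 1 ≠ (v 1).val % b 1 := hvltc c1 hc1
              obtain ⟨hc1D, hc1u⟩ := hc1
              obtain ⟨hr1D, hr1w, hr1u⟩ := hr1
              have hDsub : D ⊆ {dr, c1, r1} := by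
                intro d hd
                rcases hsplitD hd with h | h
                · exact Or.inl h
                rcases h with h | h
                · exact Or.inr (Or.inl (hDcsub h))
                · exact Or.inr (Or.inr (hDrsub h))
              by_cases hrr : (dr 1).val % b 1 = (c1 1).val % b 1
              · have hx1lt : (r1 0).val % b 0 < b 0 := mlt0 r1
                have hy1lt : (c1 1).val % b 1 < b 1 := mlt1 c1
                have hz0 : ((mkV a b ((r1 0).val % b 0) ((c1 1).val % b 1)) 0).val % b 0
                    = (r1 0).val % b 0 := mkV_res0 a b ha hb0 hb _ _ hx1lt
                have hz1 : ((mkV a b ((r1 0).val % b 0) ((c1 1).val % b 1)) 1).val % b 1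
                    = (c1 1).val % b 1 := mkV_res1 a b ha hb0 hb _ _ hy1lt
                have hdr0 : (dr 0).val % b 0 = (r1 0).val % b 0 := by
                  rcases cover (mkV a b ((r1 0).val % b 0) ((c1 1).val % b 1)) with hzD | hzz
                  · rcases hDsub hzD with h | h | h
                    · rw [h] at hz0
                      omega
                    · rw [h] at hz0
                      omega
                    · rw [h] at hz1
                      omega
                  · exfalso
                    obtain ⟨d, hdD, had0, had1⟩ := hzz
                    rcases hDsub hdD with h | h | h
                    · rw [h] at had1
                      omega
                    · rw [h] at had1
                      omega
                    · rw [h] at had0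
                      omega
                obtain ⟨w1, hw1D, hw10, hw11, hblkc1⟩ := ext c1 hc1D
                have hnedrc1 : dr ≠ c1 := by
                  intro h
                  rw [h] at hv0
                  omega
                have hw1dr : (dr 0).val % b 0 = (w1 0).val % b 0 := by
                  rcases hblkc1 dr hdr hnedrc1 with h | h
                  · exact h
                  · omega
                have hw1w : (w1 1).val % b 1 ≠ (v 1).val % b 1 := by
                  intro h
                  have hww : w1 = r1 := inj1' w1 r1 (by omega) (by omega)
                  rw [hww] at hw1D
                  exact hw1D hr1D
                have hb13 : 3 ≤ b 1 := three_le_of_lt (mlt1 v) (mlt1 c1) (mlt1 w1)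
                  (Ne.symm hy1w) (Ne.symm hw1w) (Ne.symm hw11)
                exact hgoal 3 (sncard3 hDsub) hb13
              · have hb13 : 3 ≤ b 1 := three_le_of_lt (mlt1 v) (mlt1 c1) (mlt1 dr)
                  (Ne.symm hy1w) hv1 (fun h => hrr h.symm)
                exact hgoal 3 (sncard3 hDsub) hb13
            · -- shape (1,0)
              have hDrE : Dr = ∅ := Set.not_nonempty_iff_eq_empty.mp hrne
              have hDsub : D ⊆ {dr, c1} := by
                intro d hd
                rcases hsplitD hd with h | h
                · exact Or.inl h
                rcases h with h | h
                · exact Or.inr (hDcsub h)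
                · rw [hDrE] at h
                  exact absurd h (Set.notMem_empty d)
              exact hgoal 2 (sncard2 hDsub) hb1
          · have hDcE : Dc = ∅ := Set.not_nonempty_iff_eq_empty.mp hcne
            by_cases hrne : Dr.Nonempty
            · -- shape (0,1)
              obtain ⟨r1, hr1⟩ := hrne
              have hDrsub : Dr ⊆ {r1} := fun r hr => h2r r hr r1 hr1
              have hDsub : D ⊆ {dr, r1} := by
                intro d hd
                rcases hsplitD hd with h | h
                · exact Or.inl h
                rcases h with h | h
                · rw [hDcE] at h
                  exact absurd h (Set.notMem_empty d)
                · exact Or.inr (hDrsub h)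
              exact hgoal 2 (sncard2 hDsub) hb1
            · -- shape (0,0)
              have hDrE : Dr = ∅ := Set.not_nonempty_iff_eq_empty.mp hrne
              have hDsub : D ⊆ {dr} := by
                intro d hd
                rcases hsplitD hd with h | h
                · exact h
                rcases h with h | h
                · rw [hDcE] at h
                  exact absurd h (Set.notMem_empty d)
                · rw [hDrE] at h
                  exact absurd h (Set.notMem_empty d)
              exact hgoal 1 (sncard1 hDsub) (by omega)
    · -- A ≥ 2
      rcases Nat.lt_or_ge (b 1) 3 with hb1s | hb13
      · -- b 1 = 2, hence b 0 = 2
        have hb12 : b 1 = 2 := by omega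
        have hb02 : b 0 = 2 := by omega
        have hDr1 : Dr.ncard ≤ 1 := by
          rw [Set.ncard_le_one]
          rintro x ⟨hxD, hx1, hx0⟩ y ⟨hyD, hy1, hy0⟩
          have l1 := mlt0 x
          have l2 := mlt0 y
          have l3 := mlt0 v
          refine injII x hxD y hyD (by omega) (by omega)
        have : D.ncard ≤ 4 := by omega
        have h4 : 4 ≤ a 0 * a 1 * b 1 := by
          rw [hb12]
          omega
        omega
      · have h5 : 2 * 3 ≤ (a 0 * a 1) * b 1 := Nat.mul_le_mul hA2 hb13
        omega
private lemma lowerB (a b : Fin 2 → ℕ) (ha : ∀ i, 0 < a i) (hb0 : 2 ≤ b 0) (hb : b 0 ≤ b 1) :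
    ∃ D : Set (∀ i, ZMod (a i * b i)),
      IsMinimalDomSet (multipartiteProd 2 a b) D ∧ D.ncard = a 0 * a 1 * b 1 := by
  haveI := nz a b ha hb0 hb
  have hb1 : 2 ≤ b 1 := le_trans hb0 hb
  refine ⟨{x | (x 0).val % b 0 = 0}, ⟨?_, ?_⟩, ?_⟩
  · -- dominating
    intro x
    by_cases h : (x 0).val % b 0 = 0
    · exact Or.inl h
    · right
      have hwlt : ((x 1).val % b 1 + 1) % b 1 < b 1 := Nat.mod_lt _ (by omega)
      refine ⟨mkV a b 0 (((x 1).val % b 1 + 1) % b 1), ?_, ?_⟩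
      · exact mkV_res0 a b ha hb0 hb _ _ (by omega)
      · rw [adj_iff]
        constructor
        · rw [mkV_res0 a b ha hb0 hb _ _ (by omega)]
          exact h
        · rw [mkV_res1 a b ha hb0 hb _ _ hwlt]
          have hx1 : (x 1).val % b 1 < b 1 := Nat.mod_lt _ (by omega)
          rcases Nat.lt_or_ge ((x 1).val % b 1 + 1) (b 1) with hlt | hge
          · rw [Nat.mod_eq_of_lt hlt]
            omega
          · have heq : (x 1).val % b 1 + 1 = b 1 := by omega
            rw [heq, Nat.mod_self]
            omega
  · -- minimality
    intro D' hss hdom'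
    obtain ⟨d, hdD0, hdD'⟩ := Set.exists_of_ssubset hss
    rcases hdom' d with h | ⟨d', hd', hadj⟩
    · exact hdD' h
    · have h0 : (d' 0).val % b 0 = 0 := hss.subset hd'
      have hd0 : (d 0).val % b 0 = 0 := hdD0
      exact ((adj_iff a b d d').mp hadj).1 (by omega)
  · exact (ncard_col a b ha 0 (by omega)).trans (Nat.mul_assoc _ _ _).symm

theorem stmt19 (a b : Fin 2 → ℕ) (ha : ∀ i, 0 < a i) (hb0 : 2 ≤ b 0)
    (hb : b 0 ≤ b 1) :
    upperDomNum (multipartiteProd 2 a b) = a 0 * a 1 * b 1 := by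
  obtain ⟨D0, hD0, hc0⟩ := lowerB a b ha hb0 hb
  have hmem : a 0 * a 1 * b 1 ∈
      {k | ∃ D : Set (∀ i, ZMod (a i * b i)),
        IsMinimalDomSet (multipartiteProd 2 a b) D ∧ D.ncard = k} := ⟨D0, hD0, hc0⟩
  have hub : ∀ k ∈ {k | ∃ D : Set (∀ i, ZMod (a i * b i)),
      IsMinimalDomSet (multipartiteProd 2 a b) D ∧ D.ncard = k}, k ≤ a 0 * a 1 * b 1 := by
    rintro k ⟨D, hD, rfl⟩
    exact upperB a b ha hb0 hb D hD.1 hD.2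
  exact le_antisymm (csSup_le ⟨_, hmem⟩ hub) (le_csSup ⟨a 0 * a 1 * b 1, hub⟩ hmem)
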